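/- Let S = ω ∩ ℤ⁴. Then the Hilbert basis of S is {h₁, h₂, h₃, h₄, h₅, h₆, h₇}, where h₇ = (1, 2, −1, 0); that is, every element of S is an ℕ-linear combination of h₁, …, h₇, and no hᵢ (1 ≤ i ≤ 7) can be written as a sum of two nonzero elements of S. -/
import Mathlib


/-- The seven lattice points `h₁, …, h₇` (0-indexed as `h 0, …, h 6`). -/
def h : Fin 7 → (Fin 4 → ℤ) :=
  ![![1,0,0,0], ![0,1,0,0], ![0,0,1,0], ![0,0,0,1],
    ![2,3,-2,-1], ![1,3,-1,-1], ![1,2,-1,0]]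

/-- Coercion of an integer vector to a real vector. -/
def toR (v : Fin 4 → ℤ) : Fin 4 → ℝ := fun j => (v j : ℝ)

/-- The convex cone generated by a finite family of vectors in `ℝ⁴`. -/
def cone {n : ℕ} (v : Fin n → (Fin 4 → ℝ)) : Set (Fin 4 → ℝ) :=
  {x | ∃ lam : Fin n → ℝ, (∀ i, 0 ≤ lam i) ∧ x = ∑ i, lam i • v i}

/-- The cone `ω` generated by `h₁, …, h₆`. -/
def ω : Set (Fin 4 → ℝ) := cone (fun i : Fin 6 => toR (h i.castSucc))

/-- The semigroup `S = ω ∩ ℤ⁴`. -/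
def S : Set (Fin 4 → ℤ) := {v | toR v ∈ ω}

lemma mem_ineqs {v : Fin 4 → ℤ} (hv : v ∈ S) :
    0 ≤ v 0 ∧ 0 ≤ v 1 ∧ 0 ≤ v 0 + v 2 ∧ 0 ≤ v 0 + v 3 ∧
    0 ≤ v 1 + 3 * v 3 ∧ 0 ≤ 2 * v 1 + 3 * v 2 := by
  obtain ⟨lam, hnn, hx⟩ := hv
  have h0 := hnn 0; have h1 := hnn 1; have h2 := hnn 2
  have h3 := hnn 3; have h4 := hnn 4; have h5 := hnn 5
  have e0 := congrFun hx 0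
  have e1 := congrFun hx 1
  have e2 := congrFun hx 2
  have e3 := congrFun hx 3
  rw [Fin.sum_univ_six] at e0 e1 e2 e3
  simp only [Pi.add_apply, Pi.smul_apply, smul_eq_mul, toR,
    (show h (Fin.castSucc 0) 0 = (1:ℤ) from rfl), (show h (Fin.castSucc 0) 1 = (0:ℤ) from rfl), (show h (Fin.castSucc 0) 2 = (0:ℤ) from rfl), (show h (Fin.castSucc 0) 3 = (0:ℤ) from rfl), (show h (Fin.castSucc 1) 0 = (0:ℤ) from rfl), (show h (Fin.castSucc 1) 1 = (1:ℤ) from rfl), (show h (Fin.castSucc 1) 2 = (0:ℤ) from rfl), (show h (Fin.castSucc 1) 3 = (0:ℤ) from rfl), (show h (Fin.castSucc 2) 0 = (0:ℤ) from rfl), (show h (Fin.castSucc 2) 1 = (0:ℤ) from rfl), (show h (Fin.castSucc 2) 2 = (1:ℤ) from rfl), (show h (Fin.castSucc 2) 3 = (0:ℤ) from rfl), (show h (Fin.castSucc 3) 0 = (0:ℤ) from rfl), (show h (Fin.castSucc 3) 1 = (0:ℤ) from rfl), (show h (Fin.castSucc 3) 2 = (0:ℤ) from rfl), (show h (Fin.castSucc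 3) 3 = (1:ℤ) from rfl), (show h (Fin.castSucc 4) 0 = (2:ℤ) from rfl), (show h (Fin.castSucc 4) 1 = (3:ℤ) from rfl), (show h (Fin.castSucc 4) 2 = ((-2):ℤ) from rfl), (show h (Fin.castSucc 4) 3 = ((-1):ℤ) from rfl), (show h (Fin.castSucc 5) 0 = (1:ℤ) from rfl), (show h (Fin.castSucc 5) 1 = (3:ℤ) from rfl), (show h (Fin.castSucc 5) 2 = ((-1):ℤ) from rfl), (show h (Fin.castSucc 5) 3 = ((-1):ℤ) from rfl)] at e0 e1 e2 e3
  norm_num at e0 e1 e2 e3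
  refine ⟨?_, ?_, ?_, ?_, ?_, ?_⟩
  · exact_mod_cast (by linarith : (0:ℝ) ≤ (v 0:ℝ))
  · exact_mod_cast (by linarith : (0:ℝ) ≤ (v 1:ℝ))
  · exact_mod_cast (by push_cast; linarith : (0:ℝ) ≤ ((v 0 + v 2 : ℤ):ℝ))
  · exact_mod_cast (by push_cast; linarith : (0:ℝ) ≤ ((v 0 + v 3 : ℤ):ℝ))
  · exact_mod_cast (by push_cast; linarith : (0:ℝ) ≤ ((v 1 + 3 * v 3 : ℤ):ℝ))
  · exact_mod_cast (by push_cast; linarith : (0:ℝ) ≤ ((2 * v 1 + 3 * v 2 : ℤ):ℝ))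

lemma memS_0 : h 0 ∈ S := by
  refine ⟨![(1:ℝ), (0:ℝ), (0:ℝ), (0:ℝ), (0:ℝ), (0:ℝ)], fun i => by fin_cases i <;> norm_num, ?_⟩
  funext j
  rw [Fin.sum_univ_six]
  fin_cases j
  · show ((1:ℤ):ℝ) = (1:ℝ) * ((1:ℤ):ℝ) + (0:ℝ) * ((0:ℤ):ℝ) + (0:ℝ) * ((0:ℤ):ℝ) + (0:ℝ) * ((0:ℤ):ℝ) + (0:ℝ) * ((2:ℤ):ℝ) + (0:ℝ) * ((1:ℤ):ℝ)
    norm_num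
  · show ((0:ℤ):ℝ) = (1:ℝ) * ((0:ℤ):ℝ) + (0:ℝ) * ((1:ℤ):ℝ) + (0:ℝ) * ((0:ℤ):ℝ) + (0:ℝ) * ((0:ℤ):ℝ) + (0:ℝ) * ((3:ℤ):ℝ) + (0:ℝ) * ((3:ℤ):ℝ)
    norm_num
  · show ((0:ℤ):ℝ) = (1:ℝ) * ((0:ℤ):ℝ) + (0:ℝ) * ((0:ℤ):ℝ) + (0:ℝ) * ((1:ℤ):ℝ) + (0:ℝ) * ((0:ℤ):ℝ) + (0:ℝ) * (((-2):ℤ):ℝ) + (0:ℝ) * (((-1):ℤ):ℝ)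
    norm_num
  · show ((0:ℤ):ℝ) = (1:ℝ) * ((0:ℤ):ℝ) + (0:ℝ) * ((0:ℤ):ℝ) + (0:ℝ) * ((0:ℤ):ℝ) + (0:ℝ) * ((1:ℤ):ℝ) + (0:ℝ) * (((-1):ℤ):ℝ) + (0:ℝ) * (((-1):ℤ):ℝ)
    norm_num

lemma memS_1 : h 1 ∈ S := by
  refine ⟨![(0:ℝ), (1:ℝ), (0:ℝ), (0:ℝ), (0:ℝ), (0:ℝ)], fun i => by fin_cases i <;> norm_num, ?_⟩
  funext j
  rw [Fin.sum_univ_six]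
  fin_cases j
  · show ((0:ℤ):ℝ) = (0:ℝ) * ((1:ℤ):ℝ) + (1:ℝ) * ((0:ℤ):ℝ) + (0:ℝ) * ((0:ℤ):ℝ) + (0:ℝ) * ((0:ℤ):ℝ) + (0:ℝ) * ((2:ℤ):ℝ) + (0:ℝ) * ((1:ℤ):ℝ)
    norm_num
  · show ((1:ℤ):ℝ) = (0:ℝ) * ((0:ℤ):ℝ) + (1:ℝ) * ((1:ℤ):ℝ) + (0:ℝ) * ((0:ℤ):ℝ) + (0:ℝ) * ((0:ℤ):ℝ) + (0:ℝ) * ((3:ℤ):ℝ) + (0:ℝ) * ((3:ℤ):ℝ)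
    norm_num
  · show ((0:ℤ):ℝ) = (0:ℝ) * ((0:ℤ):ℝ) + (1:ℝ) * ((0:ℤ):ℝ) + (0:ℝ) * ((1:ℤ):ℝ) + (0:ℝ) * ((0:ℤ):ℝ) + (0:ℝ) * (((-2):ℤ):ℝ) + (0:ℝ) * (((-1):ℤ):ℝ)
    norm_num
  · show ((0:ℤ):ℝ) = (0:ℝ) * ((0:ℤ):ℝ) + (1:ℝ) * ((0:ℤ):ℝ) + (0:ℝ) * ((0:ℤ):ℝ) + (0:ℝ) * ((1:ℤ):ℝ) + (0:ℝ) * (((-1):ℤ):ℝ) + (0:ℝ) * (((-1):ℤ):ℝ)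
    norm_num

lemma memS_2 : h 2 ∈ S := by
  refine ⟨![(0:ℝ), (0:ℝ), (1:ℝ), (0:ℝ), (0:ℝ), (0:ℝ)], fun i => by fin_cases i <;> norm_num, ?_⟩
  funext j
  rw [Fin.sum_univ_six]
  fin_cases j
  · show ((0:ℤ):ℝ) = (0:ℝ) * ((1:ℤ):ℝ) + (0:ℝ) * ((0:ℤ):ℝ) + (1:ℝ) * ((0:ℤ):ℝ) + (0:ℝ) * ((0:ℤ):ℝ) + (0:ℝ) * ((2:ℤ):ℝ) + (0:ℝ) * ((1:ℤ):ℝ)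
    norm_num
  · show ((0:ℤ):ℝ) = (0:ℝ) * ((0:ℤ):ℝ) + (0:ℝ) * ((1:ℤ):ℝ) + (1:ℝ) * ((0:ℤ):ℝ) + (0:ℝ) * ((0:ℤ):ℝ) + (0:ℝ) * ((3:ℤ):ℝ) + (0:ℝ) * ((3:ℤ):ℝ)
    norm_num
  · show ((1:ℤ):ℝ) = (0:ℝ) * ((0:ℤ):ℝ) + (0:ℝ) * ((0:ℤ):ℝ) + (1:ℝ) * ((1:ℤ):ℝ) + (0:ℝ) * ((0:ℤ):ℝ) + (0:ℝ) * (((-2):ℤ):ℝ) + (0:ℝ) * (((-1):ℤ):ℝ)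
    norm_num
  · show ((0:ℤ):ℝ) = (0:ℝ) * ((0:ℤ):ℝ) + (0:ℝ) * ((0:ℤ):ℝ) + (1:ℝ) * ((0:ℤ):ℝ) + (0:ℝ) * ((1:ℤ):ℝ) + (0:ℝ) * (((-1):ℤ):ℝ) + (0:ℝ) * (((-1):ℤ):ℝ)
    norm_num

lemma memS_3 : h 3 ∈ S := by
  refine ⟨![(0:ℝ), (0:ℝ), (0:ℝ), (1:ℝ), (0:ℝ), (0:ℝ)], fun i => by fin_cases i <;> norm_num, ?_⟩
  funext j
  rw [Fin.sum_univ_six]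
  fin_cases j
  · show ((0:ℤ):ℝ) = (0:ℝ) * ((1:ℤ):ℝ) + (0:ℝ) * ((0:ℤ):ℝ) + (0:ℝ) * ((0:ℤ):ℝ) + (1:ℝ) * ((0:ℤ):ℝ) + (0:ℝ) * ((2:ℤ):ℝ) + (0:ℝ) * ((1:ℤ):ℝ)
    norm_num
  · show ((0:ℤ):ℝ) = (0:ℝ) * ((0:ℤ):ℝ) + (0:ℝ) * ((1:ℤ):ℝ) + (0:ℝ) * ((0:ℤ):ℝ) + (1:ℝ) * ((0:ℤ):ℝ) + (0:ℝ) * ((3:ℤ):ℝ) + (0:ℝ) * ((3:ℤ):ℝ)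
    norm_num
  · show ((0:ℤ):ℝ) = (0:ℝ) * ((0:ℤ):ℝ) + (0:ℝ) * ((0:ℤ):ℝ) + (0:ℝ) * ((1:ℤ):ℝ) + (1:ℝ) * ((0:ℤ):ℝ) + (0:ℝ) * (((-2):ℤ):ℝ) + (0:ℝ) * (((-1):ℤ):ℝ)
    norm_num
  · show ((1:ℤ):ℝ) = (0:ℝ) * ((0:ℤ):ℝ) + (0:ℝ) * ((0:ℤ):ℝ) + (0:ℝ) * ((0:ℤ):ℝ) + (1:ℝ) * ((1:ℤ):ℝ) + (0:ℝ) * (((-1):ℤ):ℝ) + (0:ℝ) * (((-1):ℤ):ℝ)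
    norm_num

lemma memS_4 : h 4 ∈ S := by
  refine ⟨![(0:ℝ), (0:ℝ), (0:ℝ), (0:ℝ), (1:ℝ), (0:ℝ)], fun i => by fin_cases i <;> norm_num, ?_⟩
  funext j
  rw [Fin.sum_univ_six]
  fin_cases j
  · show ((2:ℤ):ℝ) = (0:ℝ) * ((1:ℤ):ℝ) + (0:ℝ) * ((0:ℤ):ℝ) + (0:ℝ) * ((0:ℤ):ℝ) + (0:ℝ) * ((0:ℤ):ℝ) + (1:ℝ) * ((2:ℤ):ℝ) + (0:ℝ) * ((1:ℤ):ℝ)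
    norm_num
  · show ((3:ℤ):ℝ) = (0:ℝ) * ((0:ℤ):ℝ) + (0:ℝ) * ((1:ℤ):ℝ) + (0:ℝ) * ((0:ℤ):ℝ) + (0:ℝ) * ((0:ℤ):ℝ) + (1:ℝ) * ((3:ℤ):ℝ) + (0:ℝ) * ((3:ℤ):ℝ)
    norm_num
  · show (((-2):ℤ):ℝ) = (0:ℝ) * ((0:ℤ):ℝ) + (0:ℝ) * ((0:ℤ):ℝ) + (0:ℝ) * ((1:ℤ):ℝ) + (0:ℝ) * ((0:ℤ):ℝ) + (1:ℝ) * (((-2):ℤ):ℝ) + (0:ℝ) * (((-1):ℤ):ℝ)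
    norm_num
  · show (((-1):ℤ):ℝ) = (0:ℝ) * ((0:ℤ):ℝ) + (0:ℝ) * ((0:ℤ):ℝ) + (0:ℝ) * ((0:ℤ):ℝ) + (0:ℝ) * ((1:ℤ):ℝ) + (1:ℝ) * (((-1):ℤ):ℝ) + (0:ℝ) * (((-1):ℤ):ℝ)
    norm_num

lemma memS_5 : h 5 ∈ S := by
  refine ⟨![(0:ℝ), (0:ℝ), (0:ℝ), (0:ℝ), (0:ℝ), (1:ℝ)], fun i => by fin_cases i <;> norm_num, ?_⟩
  funext j
  rw [Fin.sum_univ_six]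
  fin_cases j
  · show ((1:ℤ):ℝ) = (0:ℝ) * ((1:ℤ):ℝ) + (0:ℝ) * ((0:ℤ):ℝ) + (0:ℝ) * ((0:ℤ):ℝ) + (0:ℝ) * ((0:ℤ):ℝ) + (0:ℝ) * ((2:ℤ):ℝ) + (1:ℝ) * ((1:ℤ):ℝ)
    norm_num
  · show ((3:ℤ):ℝ) = (0:ℝ) * ((0:ℤ):ℝ) + (0:ℝ) * ((1:ℤ):ℝ) + (0:ℝ) * ((0:ℤ):ℝ) + (0:ℝ) * ((0:ℤ):ℝ) + (0:ℝ) * ((3:ℤ):ℝ) + (1:ℝ) * ((3:ℤ):ℝ)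
    norm_num
  · show (((-1):ℤ):ℝ) = (0:ℝ) * ((0:ℤ):ℝ) + (0:ℝ) * ((0:ℤ):ℝ) + (0:ℝ) * ((1:ℤ):ℝ) + (0:ℝ) * ((0:ℤ):ℝ) + (0:ℝ) * (((-2):ℤ):ℝ) + (1:ℝ) * (((-1):ℤ):ℝ)
    norm_num
  · show (((-1):ℤ):ℝ) = (0:ℝ) * ((0:ℤ):ℝ) + (0:ℝ) * ((0:ℤ):ℝ) + (0:ℝ) * ((0:ℤ):ℝ) + (0:ℝ) * ((1:ℤ):ℝ) + (0:ℝ) * (((-1):ℤ):ℝ) + (1:ℝ) * (((-1):ℤ):ℝ)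
    norm_num

lemma memS_6 : h 6 ∈ S := by
  refine ⟨![(0:ℝ), (1/2:ℝ), (0:ℝ), (1/2:ℝ), (1/2:ℝ), (0:ℝ)], fun i => by fin_cases i <;> norm_num, ?_⟩
  funext j
  rw [Fin.sum_univ_six]
  fin_cases j
  · show ((1:ℤ):ℝ) = (0:ℝ) * ((1:ℤ):ℝ) + (1/2:ℝ) * ((0:ℤ):ℝ) + (0:ℝ) * ((0:ℤ):ℝ) + (1/2:ℝ) * ((0:ℤ):ℝ) + (1/2:ℝ) * ((2:ℤ):ℝ) + (0:ℝ) * ((1:ℤ):ℝ)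
    norm_num
  · show ((2:ℤ):ℝ) = (0:ℝ) * ((0:ℤ):ℝ) + (1/2:ℝ) * ((1:ℤ):ℝ) + (0:ℝ) * ((0:ℤ):ℝ) + (1/2:ℝ) * ((0:ℤ):ℝ) + (1/2:ℝ) * ((3:ℤ):ℝ) + (0:ℝ) * ((3:ℤ):ℝ)
    norm_num
  · show (((-1):ℤ):ℝ) = (0:ℝ) * ((0:ℤ):ℝ) + (1/2:ℝ) * ((0:ℤ):ℝ) + (0:ℝ) * ((1:ℤ):ℝ) + (1/2:ℝ) * ((0:ℤ):ℝ) + (1/2:ℝ) * (((-2):ℤ):ℝ) + (0:ℝ) * (((-1):ℤ):ℝ)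
    norm_num
  · show ((0:ℤ):ℝ) = (0:ℝ) * ((0:ℤ):ℝ) + (1/2:ℝ) * ((0:ℤ):ℝ) + (0:ℝ) * ((0:ℤ):ℝ) + (1/2:ℝ) * ((1:ℤ):ℝ) + (1/2:ℝ) * (((-1):ℤ):ℝ) + (0:ℝ) * (((-1):ℤ):ℝ)
    norm_num


lemma decomp {v : Fin 4 → ℤ} (H1 : 0 ≤ v 0) (H2 : 0 ≤ v 1) (H3 : 0 ≤ v 0 + v 2)
    (H4 : 0 ≤ v 0 + v 3) (H5 : 0 ≤ v 1 + 3 * v 3) (H6 : 0 ≤ 2 * v 1 + 3 * v 2) :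
    ∃ c : Fin 7 → ℕ, v = ∑ i, c i • h i := by
  obtain ⟨u, w, t, hu1, hu2, hu3, hu4⟩ :
      ∃ u w t : ℕ, ((2*u+w+t : ℕ):ℤ) ≤ v 0 ∧ ((3*u+3*w+2*t : ℕ):ℤ) ≤ v 1 ∧
        0 ≤ v 2 + ((2*u+w+t : ℕ):ℤ) ∧ 0 ≤ v 3 + ((u+w : ℕ):ℤ) := by
    by_cases hpq : ((-v 2).toNat : ℕ) ≤ 2 * (-v 3).toNat
    · exact ⟨(-v 2).toNat - (-v 3).toNat,
        (-v 3).toNat - ((-v 2).toNat - (-v 3).toNat), 0, by omega, by omega, by omega, by omega⟩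
    · exact ⟨(-v 2).toNat / 2, 0, (-v 2).toNat % 2, by omega, by omega, by omega, by omega⟩
  refine ⟨![(v 0 - ((2*u+w+t : ℕ):ℤ)).toNat, (v 1 - ((3*u+3*w+2*t : ℕ):ℤ)).toNat, (v 2 + ((2*u+w+t : ℕ):ℤ)).toNat, (v 3 + ((u+w : ℕ):ℤ)).toNat, u, w, t], ?_⟩
  funext j
  rw [Fin.sum_univ_seven]
  fin_cases j
  · show v 0 = ((v 0 - ((2*u+w+t : ℕ):ℤ)).toNat) • (1:ℤ) + ((v 1 - ((3*u+3*w+2*t : ℕ):ℤ)).toNat) • (0:ℤ) + ((v 2 + ((2*u+w+t : ℕ):ℤ)).toNat) • (0:ℤ) + ((v 3 + ((u+w : ℕ):ℤ)).toNat) • (0:ℤ) + (u) • (2:ℤ) + (w) • (1:ℤ) + (t) • (1:ℤ)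
    simp only [nsmul_eq_mul]
    push_cast
    omega
  · show v 1 = ((v 0 - ((2*u+w+t : ℕ):ℤ)).toNat) • (0:ℤ) + ((v 1 - ((3*u+3*w+2*t : ℕ):ℤ)).toNat) • (1:ℤ) + ((v 2 + ((2*u+w+t : ℕ):ℤ)).toNat) • (0:ℤ) + ((v 3 + ((u+w : ℕ):ℤ)).toNat) • (0:ℤ) + (u) • (3:ℤ) + (w) • (3:ℤ) + (t) • (2:ℤ)
    simp only [nsmul_eq_mul]
    push_cast
    omega
  · show v 2 = ((v 0 - ((2*u+w+t : ℕ):ℤ)).toNat) • (0:ℤ) + ((v 1 - ((3*u+3*w+2*t : ℕ):ℤ)).toNat) • (0:ℤ) + ((v 2 + ((2*u+w+t : ℕ):ℤ)).toNat) • (1:ℤ) + ((v 3 + ((u+w : ℕ):ℤ)).toNat) • (0:ℤ) + (u) • ((-2):ℤ) + (w) • ((-1):ℤ) + (t) • ((-1):ℤ)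
    simp only [nsmul_eq_mul]
    push_cast
    omega
  · show v 3 = ((v 0 - ((2*u+w+t : ℕ):ℤ)).toNat) • (0:ℤ) + ((v 1 - ((3*u+3*w+2*t : ℕ):ℤ)).toNat) • (0:ℤ) + ((v 2 + ((2*u+w+t : ℕ):ℤ)).toNat) • (0:ℤ) + ((v 3 + ((u+w : ℕ):ℤ)).toNat) • (1:ℤ) + (u) • ((-1):ℤ) + (w) • ((-1):ℤ) + (t) • (0:ℤ)
    simp only [nsmul_eq_mul]
    push_cast
    omega


lemma irred : ∀ i : Fin 7, ¬ ∃ a ∈ S, ∃ b ∈ S, a ≠ 0 ∧ b ≠ 0 ∧ h i = a + b := by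
  intro i
  rintro ⟨a, ha, b, hb, ha0, hb0, heq⟩
  obtain ⟨A1, A2, A3, A4, A5, A6⟩ := mem_ineqs ha
  obtain ⟨B1, B2, B3, B4, B5, B6⟩ := mem_ineqs hb
  have na : a 0 ≠ 0 ∨ a 1 ≠ 0 ∨ a 2 ≠ 0 ∨ a 3 ≠ 0 := by
    by_contra hc
    push_neg at hc
    exact ha0 (funext fun j => by fin_cases j <;>
      first | exact hc.1 | exact hc.2.1 | exact hc.2.2.1 | exact hc.2.2.2)
  have nb : b 0 ≠ 0 ∨ b 1 ≠ 0 ∨ b 2 ≠ 0 ∨ b 3 ≠ 0 := by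
    by_contra hc
    push_neg at hc
    exact hb0 (funext fun j => by fin_cases j <;>
      first | exact hc.1 | exact hc.2.1 | exact hc.2.2.1 | exact hc.2.2.2)
  fin_cases i
  · have e0 : (1:ℤ) = a 0 + b 0 := congrFun heq 0
    have e1 : (0:ℤ) = a 1 + b 1 := congrFun heq 1
    have e2 : (0:ℤ) = a 2 + b 2 := congrFun heq 2
    have e3 : (0:ℤ) = a 3 + b 3 := congrFun heq 3
    rcases na with n|n|n|n <;> rcases nb with m|m|m|m <;> omega
  · have e0 : (0:ℤ) = a 0 + b 0 := congrFun heq 0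
    have e1 : (1:ℤ) = a 1 + b 1 := congrFun heq 1
    have e2 : (0:ℤ) = a 2 + b 2 := congrFun heq 2
    have e3 : (0:ℤ) = a 3 + b 3 := congrFun heq 3
    rcases na with n|n|n|n <;> rcases nb with m|m|m|m <;> omega
  · have e0 : (0:ℤ) = a 0 + b 0 := congrFun heq 0
    have e1 : (0:ℤ) = a 1 + b 1 := congrFun heq 1
    have e2 : (1:ℤ) = a 2 + b 2 := congrFun heq 2
    have e3 : (0:ℤ) = a 3 + b 3 := congrFun heq 3
    rcases na with n|n|n|n <;> rcases nb with m|m|m|m <;> omega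
  · have e0 : (0:ℤ) = a 0 + b 0 := congrFun heq 0
    have e1 : (0:ℤ) = a 1 + b 1 := congrFun heq 1
    have e2 : (0:ℤ) = a 2 + b 2 := congrFun heq 2
    have e3 : (1:ℤ) = a 3 + b 3 := congrFun heq 3
    rcases na with n|n|n|n <;> rcases nb with m|m|m|m <;> omega
  · have e0 : (2:ℤ) = a 0 + b 0 := congrFun heq 0
    have e1 : (3:ℤ) = a 1 + b 1 := congrFun heq 1
    have e2 : ((-2):ℤ) = a 2 + b 2 := congrFun heq 2
    have e3 : ((-1):ℤ) = a 3 + b 3 := congrFun heq 3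
    rcases na with n|n|n|n <;> rcases nb with m|m|m|m <;> omega
  · have e0 : (1:ℤ) = a 0 + b 0 := congrFun heq 0
    have e1 : (3:ℤ) = a 1 + b 1 := congrFun heq 1
    have e2 : ((-1):ℤ) = a 2 + b 2 := congrFun heq 2
    have e3 : ((-1):ℤ) = a 3 + b 3 := congrFun heq 3
    rcases na with n|n|n|n <;> rcases nb with m|m|m|m <;> omega
  · have e0 : (1:ℤ) = a 0 + b 0 := congrFun heq 0
    have e1 : (2:ℤ) = a 1 + b 1 := congrFun heq 1
    have e2 : ((-1):ℤ) = a 2 + b 2 := congrFun heq 2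
    have e3 : (0:ℤ) = a 3 + b 3 := congrFun heq 3
    rcases na with n|n|n|n <;> rcases nb with m|m|m|m <;> omega


/-- The Hilbert basis of `S = ω ∩ ℤ⁴` is `{h₁, …, h₇}`. -/
theorem stmt_0 :
    (∀ i, h i ∈ S) ∧
    (∀ v ∈ S, ∃ c : Fin 7 → ℕ, v = ∑ i, c i • h i) ∧
    (∀ i : Fin 7, ¬ ∃ a ∈ S, ∃ b ∈ S, a ≠ 0 ∧ b ≠ 0 ∧ h i = a + b) := by
  refine ⟨?_, ?_, irred⟩
  · intro i
    fin_cases i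
    exacts [memS_0, memS_1, memS_2, memS_3, memS_4, memS_5, memS_6]
  · intro v hv
    obtain ⟨H1, H2, H3, H4, H5, H6⟩ := mem_ineqs hv
    exact decomp H1 H2 H3 H4 H5 H6
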